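/- Let S be a right regular band of groups and a, b ∈ S. Then aS ∩ bS = abS, where xS = {x·s : s ∈ S}. Consequently, the set of principal right ideals of S forms a meet semilattice under intersection, and the map a ↦ aS is a surjective semigroup homomorphism from S onto this semilattice. -/

import Mathlib

/-- `spow s n` is the (n+1)-st power `s^(n+1)` of `s`, so that `spow s n` for `n : ℕ`
ranges over all positive powers of `s`. -/
def spow {S : Type*} [Semigroup S] (s : S) : ℕ → S
  | 0 => s
  | n + 1 => spow s n * s

section aux
variable {S : Type*} [Semigroup S]

lemma spow_add (s : S) (m n : ℕ) : spow s (m + n + 1) = spow s m * spow s n := by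
  induction n with
  | zero => rfl
  | succ n ih =>
    have : m + (n + 1) + 1 = (m + n + 1) + 1 := by omega
    rw [this, spow, ih, spow, mul_assoc]

lemma spow_periodic (s : S) (i d : ℕ) (h : spow s i = spow s (i + d)) :
    ∀ t k, spow s (i + t + k * d) = spow s (i + t) := by
  have step : ∀ t, spow s (i + t + d) = spow s (i + t) := by
    intro t
    cases t with
    | zero => simpa using h.symm
    | succ t =>
      have e1 : i + (t + 1) + d = (i + d) + t + 1 := by omega
      have e2 : i + (t + 1) = i + t + 1 := by omega
      rw [e1, spow_add, ← h, e2, spow_add]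
  intro t k
  induction k with
  | zero => simp
  | succ k ih =>
    have : i + t + (k + 1) * d = (i + t + k * d) + d := by ring
    rw [this]
    have := step (t + k * d)
    rw [← add_assoc] at this
    rw [this, ih]

lemma spow_comm (s : S) (m : ℕ) : s * spow s m = spow s m * s := by
  induction m with
  | zero => rfl
  | succ m ih => simp only [spow]; rw [← mul_assoc, ih]

lemma spow_exists_idem [Finite S] (s : S) : ∃ n, spow s n * spow s n = spow s n := by
  obtain ⟨m, n, hne, hmn⟩ := Finite.exists_ne_map_eq_of_infinite (spow s)
  wlog hlt : m < n generalizing m n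
  · exact this n m hne.symm hmn.symm (by omega)
  set i := m
  set d := n - m with hd
  have hd0 : 0 < d := by omega
  have hper := spow_periodic s i d (by rw [hmn]; congr 1; omega)
  have hD : i + 1 ≤ (i + 1) * d := Nat.le_mul_of_pos_right _ hd0
  set D := (i + 1) * d with hDdef
  refine ⟨D - 1, ?_⟩
  rw [← spow_add]
  have e1 : (D - 1) + (D - 1) + 1 = i + ((D - 1) - i) + (i + 1) * d := by
    rw [← hDdef]; omega
  have e2 : D - 1 = i + ((D - 1) - i) := by omega
  rw [e1, hper, ← e2]

end aux

/-- in a right regular band of groups, `aS ∩ bS = abS`.  Consequently the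
set of principal right ideals is closed under intersection (hence is a meet semilattice
under intersection) and `a ↦ aS` is a surjective homomorphism onto it (surjectivity being
definitional, the homomorphism property is `(ab)S = aS ∩ bS`). -/
theorem stmt14 (S : Type*) [Semigroup S] [Finite S]
    (h1 : ∀ s : S, ∀ n : ℕ, spow s n * spow s n = spow s n → spow s n * s = s)
    (h2 : ∀ e : S, e * e = e → ∀ t : S, e * t * e = t * e) :
    (∀ a b : S,
      {x : S | ∃ s : S, x = a * s} ∩ {x : S | ∃ s : S, x = b * s}
        = {x : S | ∃ s : S, x = (a * b) * s}) ∧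
    (∀ X ∈ {T : Set S | ∃ c : S, T = {x : S | ∃ s : S, x = c * s}},
      ∀ Y ∈ {T : Set S | ∃ c : S, T = {x : S | ∃ s : S, x = c * s}},
        X ∩ Y ∈ {T : Set S | ∃ c : S, T = {x : S | ∃ s : S, x = c * s}}) ∧
    (∀ a b : S, {x : S | ∃ s : S, x = (a * b) * s}
      = {x : S | ∃ s : S, x = a * s} ∩ {x : S | ∃ s : S, x = b * s}) := by
  -- every element has an idempotent positive power e with e * x = x and x * e = x,
  -- and e ∈ xS
  have key : ∀ x : S, ∃ e : S, e * e = e ∧ e * x = x ∧ x * e = x ∧ ∃ v, e = x * v := by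
    intro x
    obtain ⟨n, hn⟩ := spow_exists_idem x
    refine ⟨spow x n, hn, h1 x n hn, ?_, ?_⟩
    · rw [spow_comm, h1 x n hn]
    · cases n with
      | zero => exact ⟨x, hn.symm⟩
      | succ n => exact ⟨spow x n, (spow_comm x n).symm⟩
  -- ab ∈ bS
  have mem2 : ∀ a b : S, ∃ w : S, a * b = b * w := by
    intro a b
    obtain ⟨e, he, heb, hbe, v, hev⟩ := key b
    have h2' := h2 e he a   -- e * a * e = a * e
    refine ⟨v * a * e * b, ?_⟩
    have : a * b = a * e * b := by rw [mul_assoc, heb]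
    rw [this, ← h2', hev]
    simp only [mul_assoc]
  have main : ∀ a b : S,
      {x : S | ∃ s : S, x = a * s} ∩ {x : S | ∃ s : S, x = b * s}
        = {x : S | ∃ s : S, x = (a * b) * s} := by
    intro a b
    ext x
    simp only [Set.mem_inter_iff, Set.mem_setOf_eq]
    constructor
    · rintro ⟨⟨s, hs⟩, ⟨t, ht⟩⟩
      obtain ⟨e, he, hex, hxe, v, hev⟩ := key x
      -- e = x*v = b*t*v
      have heb : e = b * (t * v) := by rw [hev, ht, mul_assoc]
      have hse : s * e = e * s * e := (h2 e he s).symm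
      refine ⟨t * v * (s * e), ?_⟩
      calc x = x * e := hxe.symm
        _ = a * (s * e) := by rw [hs, mul_assoc]
        _ = a * (e * s * e) := by rw [← hse]
        _ = a * (b * (t * v) * s * e) := by rw [← heb]
        _ = a * b * (t * v * (s * e)) := by simp only [mul_assoc]
    · rintro ⟨s, hs⟩
      obtain ⟨w, hw⟩ := mem2 a b
      exact ⟨⟨b * s, by rw [hs, mul_assoc]⟩, ⟨w * s, by rw [hs, hw, mul_assoc]⟩⟩
  refine ⟨main, ?_, fun a b => (main a b).symm⟩
  rintro X ⟨c, rfl⟩ Y ⟨d, rfl⟩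
  exact ⟨c * d, main c d⟩
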